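/- arXiv:1909.08324 — 5 statements merged into one kernel-verified Lean document; each statement's English description precedes it below -/
import Mathlib

section
/- Let (T_t)_{t≥0} be a sublinear Markov semigroup on H with strong infinitesimal generator (A, D(A)), where f ∈ D(A) means (T_t f − f)/t converges uniformly to Af ∈ H as t ↓ 0. Then for every f ∈ D(A) and every t ≥ 0: limsup_{s→0} (T_{t+s} f − T_t f)/s ≤ T_t(Af) and liminf_{s→0} (T_{t+s} f − T_t f)/s ≥ −T_t(−Af), pointwise on R^d. -/
open Filter Topology

/-- for `f` in the domain of the strong generator `A` of a sublinear Markov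
semigroup, `-T_t(-Af) ≤ liminf_{s→0} (T_{t+s}f - T_t f)/s ≤ limsup_{s→0} (T_{t+s}f - T_t f)/s
≤ T_t(Af)` pointwise, for every `t ≥ 0`. -/
theorem sublinear_semigroup_time_derivative_bounds
    {d : ℕ} (H : Set ((Fin d → ℝ) → ℝ))
    (T : ℝ → ((Fin d → ℝ) → ℝ) → ((Fin d → ℝ) → ℝ))
    (hbd : ∀ f ∈ H, ∃ C, ∀ x, |f x| ≤ C)
    (hconst : ∀ c : ℝ, (fun _ => c) ∈ H)
    (hcone : ∀ f ∈ H, ∀ g ∈ H, ∀ a b : ℝ, a • f + b • g ∈ H)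
    (hmap : ∀ t, 0 ≤ t → ∀ f ∈ H, T t f ∈ H)
    (hsemi : ∀ t, 0 ≤ t → ∀ s, 0 ≤ s → ∀ f ∈ H, T (t + s) f = T t (T s f))
    (hid : ∀ f ∈ H, T 0 f = f)
    (hsub : ∀ t, 0 ≤ t → ∀ f ∈ H, ∀ g ∈ H, ∀ x, T t (f + g) x ≤ T t f x + T t g x)
    (hhom : ∀ t, 0 ≤ t → ∀ f ∈ H, ∀ c : ℝ, 0 ≤ c → T t (c • f) = c • T t f)
    (hmono : ∀ t, 0 ≤ t → ∀ f ∈ H, ∀ g ∈ H, (∀ x, f x ≤ g x) → ∀ x, T t f x ≤ T t g x)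
    (hone : ∀ t, 0 ≤ t → ∀ x, T t (fun _ => (1 : ℝ)) x ≤ 1)
    -- f is in the domain of the strong generator, with Af the strong (uniform) limit
    (f : (Fin d → ℝ) → ℝ) (hf : f ∈ H) (Af : (Fin d → ℝ) → ℝ) (hAf : Af ∈ H)
    (hgen : ∀ ε > (0 : ℝ), ∃ δ > (0 : ℝ), ∀ s, 0 < s → s < δ →
      ∀ x, |(T s f x - f x) / s - Af x| ≤ ε) :
    ∀ t, 0 ≤ t → ∀ x,
      limsup (fun s => (T (t + s) f x - T t f x) / s)
          (𝓝[{s : ℝ | s ≠ 0 ∧ 0 ≤ t + s}] 0) ≤ T t Af x ∧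
      -(T t (-Af) x) ≤ liminf (fun s => (T (t + s) f x - T t f x) / s)
          (𝓝[{s : ℝ | s ≠ 0 ∧ 0 ≤ t + s}] 0) := by
  -- closure properties of H
  have hsmulH : ∀ g ∈ H, ∀ a : ℝ, a • g ∈ H := by
    intro g hg a
    have h := hcone g hg g hg a 0
    simpa using h
  have hnegH : ∀ g ∈ H, -g ∈ H := by
    intro g hg
    have h := hsmulH g hg (-1)
    simpa using h
  have haddH : ∀ g ∈ H, ∀ h ∈ H, g + h ∈ H := by
    intro g hg h hh
    have h2 := hcone g hg h hh 1 1
    simpa using h2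
  have hsubH : ∀ g ∈ H, ∀ h ∈ H, g - h ∈ H := by
    intro g hg h hh
    have h2 := hcone g hg h hh 1 (-1)
    have he : (1:ℝ) • g + (-1:ℝ) • h = g - h := by
      funext y; simp [sub_eq_add_neg]
    rwa [he] at h2
  -- T r of a nonnegative constant is at most that constant
  have hconstT : ∀ r, 0 ≤ r → ∀ c : ℝ, 0 ≤ c → ∀ y, T r (fun _ => c) y ≤ c := by
    intro r hr c hc y
    have he : (fun _ : Fin d → ℝ => c) = c • (fun _ => (1:ℝ)) := by funext z; simp
    rw [he, hhom r hr _ (hconst 1) c hc]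
    have h1 := hone r hr y
    have h2 : (c • T r (fun _ => (1:ℝ))) y = c * T r (fun _ => (1:ℝ)) y := rfl
    rw [h2]
    nlinarith [mul_le_mul_of_nonneg_left h1 hc]
  -- key comparison lemma: g ≤ h + c pointwise implies T r g ≤ T r h + c pointwise
  have hkey : ∀ r, 0 ≤ r → ∀ g ∈ H, ∀ h ∈ H, ∀ c : ℝ, 0 ≤ c →
      (∀ y, g y ≤ h y + c) → ∀ y, T r g y ≤ T r h y + c := by
    intro r hr g hg h hh c hc hle y
    have hH : (h + fun _ => c) ∈ H := haddH h hh _ (hconst c)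
    have h1 : T r g y ≤ T r (h + fun _ => c) y :=
      hmono r hr g hg _ hH (fun z => by simpa using hle z) y
    have h2 := hsub r hr h hh (fun _ => c) (hconst c) y
    have h3 := hconstT r hr c hc y
    linarith
  have hsmulT : ∀ r, 0 ≤ r → ∀ g ∈ H, ∀ a : ℝ, 0 ≤ a → ∀ y, T r (a • g) y = a * T r g y := by
    intro r hr g hg a ha y
    rw [hhom r hr g hg a ha]; rfl
  -- reverse subadditivity : T r g - T r h ≤ T r (g - h)
  have hsub2 : ∀ r, 0 ≤ r → ∀ g ∈ H, ∀ h ∈ H, ∀ y, T r g y - T r h y ≤ T r (g - h) y := by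
    intro r hr g hg h hh y
    have heq : (g - h) + h = g := by funext z; simp
    have h1 := hsub r hr (g - h) (hsubH g hg h hh) h hh y
    rw [heq] at h1
    linarith
  intro t ht x
  have hLne : (𝓝[{s : ℝ | s ≠ 0 ∧ 0 ≤ t + s}] (0:ℝ)).NeBot := by
    refine Filter.neBot_of_le (f := 𝓝[Set.Ioi (0:ℝ)] 0) ?_
    refine nhdsWithin_mono 0 ?_
    intro s hs
    have hs' : (0:ℝ) < s := hs
    exact ⟨ne_of_gt hs', by linarith⟩
  -- core pointwise estimate
  have hcore : ∀ ε : ℝ, 0 < ε → ∃ δ' > (0:ℝ), ∀ s : ℝ, s ≠ 0 → 0 ≤ t + s → |s| < δ' →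
      (T (t + s) f x - T t f x) / s ≤ T t Af x + 5*ε ∧
      -(T t (-Af) x) - 5*ε ≤ (T (t + s) f x - T t f x) / s := by
    intro ε hε
    obtain ⟨δ, hδ, hδ'⟩ := hgen ε hε
    refine ⟨δ/2, by positivity, ?_⟩
    intro s hs0 hts habs
    rcases hs0.lt_or_gt with hneg | hpos
    · -- left case : s < 0
      have habs' := abs_lt.mp habs
      have hu : (0:ℝ) < -s := by linarith
      have huσ : -s < δ/2 := by linarith [habs'.1]
      have hσpos : (0:ℝ) < δ/2 := by positivity
      have hσδ : δ/2 < δ := by linarith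
      have huδ : -s < δ := by linarith
      have huσδ : -s + δ/2 < δ := by linarith
      have hqu := hδ' (-s) hu huδ
      have hqσ := hδ' (δ/2) hσpos hσδ
      have hquσ := hδ' (-s + δ/2) (by linarith) huσδ
      have hTσf : T (δ/2) f ∈ H := hmap (δ/2) hσpos.le f hf
      have hTuf : T (-s) f ∈ H := hmap (-s) hu.le f hf
      -- one-sided strong continuity of Af : Af - T_u Af ≤ 4ε
      have hAfcont : ∀ y, Af y - T (-s) Af y ≤ 4*ε := by
        intro y
        have hqH : ((1/(δ/2)) • (T (δ/2) f - f)) ∈ H := hsmulH _ (hsubH _ hTσf f hf) (1/(δ/2))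
        have h1 : ∀ z, ((1/(δ/2)) • (T (δ/2) f - f)) z ≤ Af z + ε := by
          intro z
          have h := (abs_le.mp (hqσ z)).2
          have h2 : (T (δ/2) f z - f z) / (δ/2) ≤ Af z + ε := by linarith
          have h3 : ((1/(δ/2)) • (T (δ/2) f - f)) z = (T (δ/2) f z - f z) / (δ/2) := by
            simp [div_eq_inv_mul]
          rw [h3]; exact h2
        have h2 : T (-s) ((1/(δ/2)) • (T (δ/2) f - f)) y ≤ T (-s) Af y + ε :=
          hkey (-s) hu.le _ hqH Af hAf ε hε.le h1 y
        have h3 : T (-s) (T (δ/2) f) y - T (-s) f y ≤ T (-s) (T (δ/2) f - f) y :=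
          hsub2 (-s) hu.le _ hTσf f hf y
        have h4 : T (-s + δ/2) f = T (-s) (T (δ/2) f) := hsemi (-s) hu.le (δ/2) hσpos.le f hf
        have h5 : f y + (-s + δ/2)*(Af y - ε) ≤ T (-s + δ/2) f y := by
          have h := (abs_le.mp (hquσ y)).1
          have h6 : Af y - ε ≤ (T (-s + δ/2) f y - f y)/(-s + δ/2) := by linarith
          have h7 := (le_div_iff₀ (by linarith : (0:ℝ) < -s + δ/2)).mp h6
          linarith
        have h7 : T (-s) f y ≤ f y + (-s)*(Af y + ε) := by
          have h := (abs_le.mp (hqu y)).2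
          have h8 : (T (-s) f y - f y)/(-s) ≤ Af y + ε := by linarith
          have h9 := (div_le_iff₀ hu).mp h8
          linarith
        have h9 : T (-s) ((1/(δ/2)) • (T (δ/2) f - f)) y = (1/(δ/2)) * T (-s) (T (δ/2) f - f) y :=
          hsmulT (-s) hu.le _ (hsubH _ hTσf f hf) (1/(δ/2)) (by positivity) y
        have h10 : (δ/2) * Af y - 3*(δ/2)*ε ≤ T (-s) (T (δ/2) f - f) y := by
          rw [h4] at h5
          linarith [mul_nonneg (show (0:ℝ) ≤ s + δ/2 by linarith) hε.le]
        have h12 : Af y - 3*ε ≤ T (-s) ((1/(δ/2)) • (T (δ/2) f - f)) y := by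
          rw [h9]
          have h13 : (1/(δ/2)) * T (-s) (T (δ/2) f - f) y = T (-s) (T (δ/2) f - f) y / (δ/2) := by
            ring
          rw [h13, le_div_iff₀ hσpos]
          linarith
        linarith
      -- one-sided strong continuity of -Af : -Af - T_u (-Af) ≤ 4ε
      have hnAfcont : ∀ y, (-Af) y - T (-s) (-Af) y ≤ 4*ε := by
        intro y
        have hqH : ((1/(δ/2)) • (f - T (δ/2) f)) ∈ H := hsmulH _ (hsubH f hf _ hTσf) (1/(δ/2))
        have h1 : ∀ z, ((1/(δ/2)) • (f - T (δ/2) f)) z ≤ (-Af) z + ε := by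
          intro z
          have h := (abs_le.mp (hqσ z)).1
          have hz := (le_div_iff₀ hσpos).mp (by linarith : Af z - ε ≤ (T (δ/2) f z - f z)/(δ/2))
          have h2 : (f z - T (δ/2) f z) / (δ/2) ≤ -Af z + ε := by
            rw [div_le_iff₀ hσpos]
            linarith
          have h3 : ((1/(δ/2)) • (f - T (δ/2) f)) z = (f z - T (δ/2) f z) / (δ/2) := by
            simp [div_eq_inv_mul]
          rw [h3]
          simpa using h2
        have h2 : T (-s) ((1/(δ/2)) • (f - T (δ/2) f)) y ≤ T (-s) (-Af) y + ε :=
          hkey (-s) hu.le _ hqH (-Af) (hnegH Af hAf) ε hε.le h1 y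
        have h3 : T (-s) f y - T (-s) (T (δ/2) f) y ≤ T (-s) (f - T (δ/2) f) y :=
          hsub2 (-s) hu.le f hf _ hTσf y
        have h4 : T (-s + δ/2) f = T (-s) (T (δ/2) f) := hsemi (-s) hu.le (δ/2) hσpos.le f hf
        have h5 : T (-s + δ/2) f y ≤ f y + (-s + δ/2)*(Af y + ε) := by
          have h := (abs_le.mp (hquσ y)).2
          have h6 : (T (-s + δ/2) f y - f y)/(-s + δ/2) ≤ Af y + ε := by linarith
          have h7 := (div_le_iff₀ (by linarith : (0:ℝ) < -s + δ/2)).mp h6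
          linarith
        have h7 : f y + (-s)*(Af y - ε) ≤ T (-s) f y := by
          have h := (abs_le.mp (hqu y)).1
          have h8 : Af y - ε ≤ (T (-s) f y - f y)/(-s) := by linarith
          have h9 := (le_div_iff₀ hu).mp h8
          linarith
        have h9 : T (-s) ((1/(δ/2)) • (f - T (δ/2) f)) y = (1/(δ/2)) * T (-s) (f - T (δ/2) f) y :=
          hsmulT (-s) hu.le _ (hsubH f hf _ hTσf) (1/(δ/2)) (by positivity) y
        have h10 : (δ/2) * (-Af y) - 3*(δ/2)*ε ≤ T (-s) (f - T (δ/2) f) y := by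
          rw [h4] at h5
          linarith [mul_nonneg (show (0:ℝ) ≤ s + δ/2 by linarith) hε.le]
        have h12 : -Af y - 3*ε ≤ T (-s) ((1/(δ/2)) • (f - T (δ/2) f)) y := by
          rw [h9]
          have h13 : (1/(δ/2)) * T (-s) (f - T (δ/2) f) y = T (-s) (f - T (δ/2) f) y / (δ/2) := by
            ring
          rw [h13, le_div_iff₀ hσpos]
          linarith
        have h14 : (-Af) y = -Af y := rfl
        rw [h14]
        linarith
      -- time shift estimate
      have hr : (0:ℝ) ≤ t + s := hts
      have htru : t = (t + s) + (-s) := by ring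
      have hshift : ∀ g ∈ H, ∀ c : ℝ, 0 ≤ c → (∀ z, g z - T (-s) g z ≤ c) →
          T (t+s) g x ≤ T t g x + c := by
        intro g hg c hc hcc
        have h1 : T (t+s) g x ≤ T (t+s) (T (-s) g) x + c :=
          hkey (t+s) hr g hg _ (hmap (-s) hu.le g hg) c hc (fun z => by linarith [hcc z]) x
        have h2 : T ((t+s) + (-s)) g = T (t+s) (T (-s) g) := hsemi (t+s) hr (-s) hu.le g hg
        rw [← htru] at h2
        rw [← h2] at h1
        exact h1
      have hTrAf : T (t+s) Af x ≤ T t Af x + 4*ε :=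
        hshift Af hAf (4*ε) (by positivity) hAfcont
      have hTrnAf : T (t+s) (-Af) x ≤ T t (-Af) x + 4*ε :=
        hshift (-Af) (hnegH Af hAf) (4*ε) (by positivity) hnAfcont
      -- pointwise generator bounds at time -s
      have hub1 : ∀ z, T (-s) f z ≤ (f + (-s) • Af) z + (-s) * ε := by
        intro z
        have h := (abs_le.mp (hqu z)).2
        have h2 : (T (-s) f z - f z) / (-s) ≤ Af z + ε := by linarith
        have h3 := (div_le_iff₀ hu).mp h2
        have h4 : (f + (-s) • Af) z = f z + (-s) * Af z := by simp
        rw [h4]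
        linarith
      have hlb1 : ∀ z, (f - T (-s) f) z ≤ ((-s) • (-Af)) z + (-s) * ε := by
        intro z
        have h := (abs_le.mp (hqu z)).1
        have h2 : Af z - ε ≤ (T (-s) f z - f z) / (-s) := by linarith
        have h3 := (le_div_iff₀ hu).mp h2
        have h4 : (f - T (-s) f) z = f z - T (-s) f z := rfl
        have h5 : ((-s) • (-Af)) z = (-s) * (-Af z) := by simp
        rw [h4, h5]
        linarith
      have hTt : T t f = T (t+s) (T (-s) f) := by
        have h2 : T ((t+s) + (-s)) f = T (t+s) (T (-s) f) := hsemi (t+s) hr (-s) hu.le f hf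
        rw [← htru] at h2
        exact h2
      have e1 : T (t+s) (T (-s) f) x ≤ T (t+s) (f + (-s) • Af) x + (-s)*ε :=
        hkey (t+s) hr _ hTuf _ (haddH f hf _ (hsmulH Af hAf (-s))) ((-s)*ε)
          (by positivity) hub1 x
      have e2 : T (t+s) (f + (-s) • Af) x ≤ T (t+s) f x + T (t+s) ((-s) • Af) x :=
        hsub (t+s) hr f hf _ (hsmulH Af hAf (-s)) x
      have e3 : T (t+s) ((-s) • Af) x = (-s) * T (t+s) Af x :=
        hsmulT (t+s) hr Af hAf (-s) hu.le x
      have e6 : T (t+s) f x ≤ T (t+s) (T (-s) f) x + T (t+s) (f - T (-s) f) x := by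
        have heq : T (-s) f + (f - T (-s) f) = f := by funext z; simp
        have h := hsub (t+s) hr (T (-s) f) hTuf (f - T (-s) f) (hsubH f hf _ hTuf) x
        rwa [heq] at h
      have e4 : T (t+s) (f - T (-s) f) x ≤ T (t+s) ((-s) • (-Af)) x + (-s)*ε :=
        hkey (t+s) hr _ (hsubH f hf _ hTuf) _ (hsmulH _ (hnegH Af hAf) (-s)) ((-s)*ε)
          (by positivity) hlb1 x
      have e5 : T (t+s) ((-s) • (-Af)) x = (-s) * T (t+s) (-Af) x :=
        hsmulT (t+s) hr _ (hnegH Af hAf) (-s) hu.le x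
      have hTt' : T t f x = T (t+s) (T (-s) f) x := by rw [hTt]
      constructor
      · rw [div_le_iff_of_neg hneg]
        have hg : (T t Af x + 5*ε) * s = -((T t Af x + 5*ε) * (-s)) := by ring
        rw [hg]
        linarith [mul_le_mul_of_nonneg_left hTrAf hu.le, e1, e2, e3, hTt']
      · rw [le_div_iff_of_neg hneg]
        have hg : (-(T t (-Af) x) - 5*ε) * s = (T t (-Af) x + 5*ε) * (-s) := by ring
        rw [hg]
        linarith [mul_le_mul_of_nonneg_left hTrnAf hu.le, e4, e5, e6, hTt']
    · -- right case : 0 < s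
      have hsδ : s < δ := by
        have h := abs_lt.mp habs; linarith [h.2]
      have hq := hδ' s hpos hsδ
      have hTsf : T s f ∈ H := hmap s hpos.le f hf
      have hub1 : ∀ y, T s f y ≤ (f + s • Af) y + s * ε := by
        intro y
        have h1 := (abs_le.mp (hq y)).2
        have h2 : (T s f y - f y) / s ≤ Af y + ε := by linarith
        have h3 := (div_le_iff₀ hpos).mp h2
        have h4 : (f + s • Af) y = f y + s * Af y := by simp
        rw [h4]
        linarith
      have hlb1 : ∀ y, (f - T s f) y ≤ (s • (-Af)) y + s * ε := by
        intro y
        have h1 := (abs_le.mp (hq y)).1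
        have h2 : Af y - ε ≤ (T s f y - f y) / s := by linarith
        have h3 := (le_div_iff₀ hpos).mp h2
        have h4 : (f - T s f) y = f y - T s f y := rfl
        have h5 : (s • (-Af)) y = s * (-Af y) := by simp
        rw [h4, h5]
        linarith
      have hfsAf : (f + s • Af) ∈ H := haddH f hf _ (hsmulH Af hAf s)
      have hsemi1 : T (t + s) f = T t (T s f) := hsemi t ht s hpos.le f hf
      have e1 : T t (T s f) x ≤ T t (f + s • Af) x + s * ε :=
        hkey t ht _ hTsf _ hfsAf (s*ε) (by positivity) hub1 x
      have e2 : T t (f + s • Af) x ≤ T t f x + T t (s • Af) x :=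
        hsub t ht f hf _ (hsmulH Af hAf s) x
      have e3 : T t (s • Af) x = s * T t Af x := hsmulT t ht Af hAf s hpos.le x
      have hfq : (f - T s f) ∈ H := hsubH f hf _ hTsf
      have e4 : T t (f - T s f) x ≤ T t (s • (-Af)) x + s * ε :=
        hkey t ht _ hfq _ (hsmulH _ (hnegH Af hAf) s) (s*ε) (by positivity) hlb1 x
      have e5 : T t (s • (-Af)) x = s * T t (-Af) x :=
        hsmulT t ht _ (hnegH Af hAf) s hpos.le x
      have e6 : T t f x ≤ T t (T s f) x + T t (f - T s f) x := by
        have heq : T s f + (f - T s f) = f := by funext y; simp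
        have h := hsub t ht (T s f) hTsf (f - T s f) hfq x
        rwa [heq] at h
      constructor
      · rw [hsemi1, div_le_iff₀ hpos]
        linarith [mul_nonneg hpos.le hε.le, e1, e2, e3]
      · rw [hsemi1, le_div_iff₀ hpos]
        linarith [mul_nonneg hpos.le hε.le, e4, e5, e6]
  -- eventual bounds
  have hmain : ∀ ε : ℝ, 0 < ε → (∀ᶠ s in 𝓝[{s : ℝ | s ≠ 0 ∧ 0 ≤ t + s}] (0:ℝ),
      (T (t + s) f x - T t f x) / s ≤ T t Af x + ε ∧
      -(T t (-Af) x) - ε ≤ (T (t + s) f x - T t f x) / s) := by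
    intro ε hε
    obtain ⟨δ', hδ'pos, hδ'⟩ := hcore (ε/5) (by positivity)
    have h1 : ∀ᶠ s in 𝓝 (0:ℝ), |s| < δ' := by
      have hb : Metric.ball (0:ℝ) δ' ∈ 𝓝 (0:ℝ) := Metric.ball_mem_nhds _ hδ'pos
      filter_upwards [hb] with s hs
      simpa [Real.dist_eq] using hs
    filter_upwards [self_mem_nhdsWithin, h1.filter_mono nhdsWithin_le_nhds] with s hsS hs2
    obtain ⟨hs0, hts⟩ := hsS
    have h := hδ' s hs0 hts hs2
    constructor
    · linarith [h.1]
    · linarith [h.2]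
  have hbdd_le : IsBoundedUnder (· ≤ ·) (𝓝[{s : ℝ | s ≠ 0 ∧ 0 ≤ t + s}] (0:ℝ))
      (fun s => (T (t + s) f x - T t f x) / s) :=
    ⟨T t Af x + 1, eventually_map.2 ((hmain 1 one_pos).mono fun s hs => hs.1)⟩
  have hbdd_ge : IsBoundedUnder (· ≥ ·) (𝓝[{s : ℝ | s ≠ 0 ∧ 0 ≤ t + s}] (0:ℝ))
      (fun s => (T (t + s) f x - T t f x) / s) :=
    ⟨-(T t (-Af) x) - 1, eventually_map.2 ((hmain 1 one_pos).mono fun s hs => hs.2)⟩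
  constructor
  · refine le_of_forall_pos_le_add fun ε hε => ?_
    exact limsup_le_of_le hbdd_ge.isCoboundedUnder_le
      ((hmain ε hε).mono fun s hs => hs.1)
  · refine le_of_forall_pos_le_add fun ε hε => ?_
    have h : -(T t (-Af) x) - ε ≤ liminf (fun s => (T (t + s) f x - T t f x) / s)
        (𝓝[{s : ℝ | s ≠ 0 ∧ 0 ≤ t + s}] 0) :=
      le_liminf_of_le hbdd_le.isCoboundedUnder_ge
        ((hmain ε hε).mono fun s hs => hs.2)
    linarith
end

section
/- Sublinear Dynkin formula: Let (T_t)_{t≥0} be a sublinear Markov semigroup on H with strong infinitesimal generator (A, D(A)). Then for every f ∈ D(A) and t ≥ 0, pointwise on R^d: −∫_0^t T_s(−Af) ds ≤ T_t f − f ≤ ∫_0^t T_s(Af) ds. -/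
open Filter Topology MeasureTheory intervalIntegral

/-- A set of reals such that each of its points has a right-neighborhood interval inside the
set is measurable (it is an open set union a countable set). -/
lemma SDF.rightOpen_measurableSet (S : Set ℝ)
    (h : ∀ u ∈ S, ∃ δ > (0:ℝ), Set.Ioo u (u+δ) ⊆ S) : MeasurableSet S := by
  classical
  choose! δ hδ hsub using h
  set U : Set ℝ := ⋃ u ∈ S, Set.Ioo u (u + δ u) with hU
  have hUopen : IsOpen U := isOpen_biUnion (fun u _ => isOpen_Ioo)
  have hUS : U ⊆ S := by
    intro y hy
    simp only [hU, Set.mem_iUnion] at hy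
    obtain ⟨u, hu, hy⟩ := hy
    exact hsub u hu hy
  have hq : ∀ u ∈ S \ U, ∃ q : ℚ, u < (q:ℝ) ∧ (q:ℝ) < u + δ u := by
    intro u hu
    exact exists_rat_btwn (by linarith [hδ u hu.1])
  choose! q hq1 hq2 using hq
  have hinj : Set.InjOn q (S \ U) := by
    have key : ∀ a ∈ S \ U, ∀ b ∈ S \ U, a < b → (q a : ℝ) < q b := by
      intro a ha b hb hab
      have hba : a + δ a ≤ b := by
        by_contra hcon
        push_neg at hcon
        have : b ∈ U := by
          simp only [hU, Set.mem_iUnion]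
          exact ⟨a, ha.1, ⟨hab, hcon⟩⟩
        exact hb.2 this
      calc (q a : ℝ) < a + δ a := hq2 a ha
        _ ≤ b := hba
        _ < q b := hq1 b hb
    intro a ha b hb hab
    rcases lt_trichotomy a b with h' | h' | h'
    · exact absurd (congrArg (fun r : ℚ => (r:ℝ)) hab) (ne_of_lt (key a ha b hb h'))
    · exact h'
    · exact absurd (congrArg (fun r : ℚ => (r:ℝ)) hab) (ne_of_gt (key b hb a ha h'))
  have hcnt : (S \ U).Countable :=
    (Set.mapsTo_univ q _).countable_of_injOn hinj (Set.countable_univ)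
  have : S = U ∪ (S \ U) := by
    rw [Set.union_diff_cancel' (le_refl _) hUS]
  rw [this]
  exact hUopen.measurableSet.union hcnt.measurableSet

/-- A bounded function which is uniformly "lower semicontinuous from the right" is measurable. -/
lemma SDF.measurable_of_right (Φ : ℝ → ℝ)
    (h : ∀ ε > (0:ℝ), ∀ u : ℝ, ∃ δ > (0:ℝ), ∀ v, u < v → v < u + δ → Φ u - ε ≤ Φ v) :
    Measurable Φ := by
  apply measurable_of_Ioi
  intro a
  apply SDF.rightOpen_measurableSet
  intro u hu
  simp only [Set.mem_preimage, Set.mem_Ioi] at hu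
  obtain ⟨δ, hδ, hv⟩ := h ((Φ u - a)/2) (by linarith) u
  refine ⟨δ, hδ, fun v hv' => ?_⟩
  simp only [Set.mem_preimage, Set.mem_Ioi]
  have := hv v hv'.1 hv'.2
  linarith

/-- Main real-analysis lemma: if `F` grows at rate at most `Φ + ε` in a uniform right-sided
sense and `Φ` is right-lower-semicontinuous uniformly, then `F t - F 0 ≤ ∫ Φ`. -/
lemma SDF.main (F Φ : ℝ → ℝ) (hΦm : Measurable Φ) (C : ℝ) (hΦb : ∀ s, |Φ s| ≤ C)
    (hb : ∀ ε > (0:ℝ), ∃ δ > (0:ℝ), ∀ s, 0 ≤ s → ∀ h, 0 < h → h < δ →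
       Φ s - ε ≤ Φ (s+h) ∧ F (s+h) - F s ≤ h * (Φ s + ε))
    (t : ℝ) (ht : 0 ≤ t) : F t - F 0 ≤ ∫ s in (0:ℝ)..t, Φ s := by
  have hint : ∀ a b : ℝ, IntervalIntegrable Φ volume a b := by
    intro a b
    rw [intervalIntegrable_iff]
    apply Measure.integrableOn_of_bounded measure_Ioc_lt_top.ne hΦm.aestronglyMeasurable
    exact Filter.Eventually.of_forall (fun s => by simpa using hΦb s)
  have key : ∀ ε > (0:ℝ), F t - F 0 ≤ (∫ s in (0:ℝ)..t, Φ s) + 2 * ε * t := by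
    intro ε hε
    obtain ⟨δ, hδ, hstep⟩ := hb ε hε
    set G : ℝ → ℝ := fun τ => (∫ s in (0:ℝ)..τ, Φ s) + 2*ε*τ - (F τ - F 0) with hG
    have hGstep : ∀ s, 0 ≤ s → ∀ h, 0 < h → h < δ → G s ≤ G (s+h) := by
      intro s hs h hh hhδ
      have hadd : (∫ r in (0:ℝ)..s, Φ r) + (∫ r in s..(s+h), Φ r) = ∫ r in (0:ℝ)..(s+h), Φ r :=
        integral_add_adjacent_intervals (hint 0 s) (hint s (s+h))
      have hlow : h * (Φ s - ε) ≤ ∫ r in s..(s+h), Φ r := by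
        have hmono : ∀ r ∈ Set.Icc s (s+h), Φ s - ε ≤ Φ r := by
          intro r hr
          rcases eq_or_lt_of_le hr.1 with heq | hlt
          · rw [← heq]; linarith
          · have h1 : r = s + (r - s) := by ring
            have := (hstep s hs (r - s) (by linarith) (by linarith [hr.2])).1
            rw [h1]; exact this
        calc h * (Φ s - ε) = ∫ _r in s..(s+h), (Φ s - ε) := by
              rw [intervalIntegral.integral_const, smul_eq_mul]; ring
          _ ≤ ∫ r in s..(s+h), Φ r :=
              intervalIntegral.integral_mono_on (by linarith) intervalIntegrable_const
                (hint s (s+h)) hmono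
      have hF : F (s+h) - F s ≤ h * (Φ s + ε) := (hstep s hs h hh hhδ).2
      simp only [hG]
      rw [← hadd]
      nlinarith
    have hchain : ∀ n : ℕ, ∀ u : ℝ, 0 < u → u < δ → 0 ≤ G (n * u) := by
      intro n
      induction n with
      | zero => intro u hu hud; simp [hG]
      | succ n ih =>
        intro u hu hud
        have h1 : ((n:ℝ)+1) * u = (n:ℝ) * u + u := by ring
        have h2 := hGstep ((n:ℝ)*u) (by positivity) u hu hud
        have := ih u hu hud
        push_cast
        rw [h1]
        linarith
    rcases eq_or_lt_of_le ht with rfl | htpos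
    · simp [hG]
    · obtain ⟨n, hn⟩ := exists_nat_gt (t / δ)
      have hn0 : 0 < (n:ℝ) := lt_trans (div_pos htpos hδ) hn
      have hu : t / n < δ := by
        rw [div_lt_iff₀ hn0]
        rw [div_lt_iff₀ hδ] at hn
        nlinarith
      have := hchain n (t/n) (div_pos htpos hn0) hu
      rw [mul_div_cancel₀ t hn0.ne'] at this
      simp only [hG] at this
      linarith
  rcases eq_or_lt_of_le ht with rfl | htpos
  · have := key 1 one_pos; linarith
  · by_contra hcon
    push_neg at hcon
    set ε := (F t - F 0 - ∫ s in (0:ℝ)..t, Φ s) / (4 * t) with hε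
    have hεpos : 0 < ε := by
      apply div_pos (by linarith) (by linarith)
    have := key ε hεpos
    have h4t : (0:ℝ) < 4 * t := by linarith
    have hD : ε * (4 * t) = F t - F 0 - ∫ s in (0:ℝ)..t, Φ s := by
      rw [hε]; field_simp
    nlinarith [this, hD]

/-- sublinear Dynkin formula: for `f` in the domain of the strong generator `A`
of a sublinear Markov semigroup: `-∫₀ᵗ T_s(-Af) ds ≤ T_t f - f ≤ ∫₀ᵗ T_s(Af) ds` pointwise. -/
theorem sublinear_dynkin_formula
    {d : ℕ} (H : Set ((Fin d → ℝ) → ℝ))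
    (T : ℝ → ((Fin d → ℝ) → ℝ) → ((Fin d → ℝ) → ℝ))
    (hbd : ∀ f ∈ H, ∃ C, ∀ x, |f x| ≤ C)
    (hconst : ∀ c : ℝ, (fun _ => c) ∈ H)
    (hcone : ∀ f ∈ H, ∀ g ∈ H, ∀ a b : ℝ, a • f + b • g ∈ H)
    (hmap : ∀ t, 0 ≤ t → ∀ f ∈ H, T t f ∈ H)
    (hsemi : ∀ t, 0 ≤ t → ∀ s, 0 ≤ s → ∀ f ∈ H, T (t + s) f = T t (T s f))
    (hid : ∀ f ∈ H, T 0 f = f)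
    (hsub : ∀ t, 0 ≤ t → ∀ f ∈ H, ∀ g ∈ H, ∀ x, T t (f + g) x ≤ T t f x + T t g x)
    (hhom : ∀ t, 0 ≤ t → ∀ f ∈ H, ∀ c : ℝ, 0 ≤ c → T t (c • f) = c • T t f)
    (hmono : ∀ t, 0 ≤ t → ∀ f ∈ H, ∀ g ∈ H, (∀ x, f x ≤ g x) → ∀ x, T t f x ≤ T t g x)
    (hone : ∀ t, 0 ≤ t → ∀ x, T t (fun _ => (1 : ℝ)) x ≤ 1)
    -- f is in the domain of the strong generator, with Af the strong (uniform) limit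
    (f : (Fin d → ℝ) → ℝ) (hf : f ∈ H) (Af : (Fin d → ℝ) → ℝ) (hAf : Af ∈ H)
    (hgen : ∀ ε > (0 : ℝ), ∃ δ > (0 : ℝ), ∀ s, 0 < s → s < δ →
      ∀ x, |(T s f x - f x) / s - Af x| ≤ ε) :
    ∀ t, 0 ≤ t → ∀ x,
      -(∫ s in (0 : ℝ)..t, T s (-Af) x) ≤ T t f x - f x ∧
      T t f x - f x ≤ ∫ s in (0 : ℝ)..t, T s Af x := by
  -- membership helpers
  have hsmul_mem : ∀ g ∈ H, ∀ a : ℝ, a • g ∈ H := by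
    intro g hg a
    have := hcone g hg g hg a 0
    convert this using 1
    funext z; simp
  have hsub_mem : ∀ g₁ ∈ H, ∀ g₂ ∈ H, g₁ - g₂ ∈ H := by
    intro g₁ h₁ g₂ h₂
    have := hcone g₁ h₁ g₂ h₂ 1 (-1)
    convert this using 1
    funext z; simp [sub_eq_add_neg]
  have hneg_mem : ∀ g ∈ H, -g ∈ H := by
    intro g hg
    have := hsmul_mem g hg (-1)
    convert this using 1
    funext z; simp
  -- domination principle
  have key2 : ∀ s, 0 ≤ s → ∀ g ∈ H, ∀ g' ∈ H, ∀ c : ℝ, 0 ≤ c →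
      (∀ y, g y ≤ g' y + c) → ∀ y, T s g y ≤ T s g' y + c := by
    intro s hs g hg g' hg' c hc hle y
    have hsum : g' + (fun _ => c) ∈ H := by
      have := hcone g' hg' _ (hconst 1) 1 c
      convert this using 1
      funext z; simp
    have h1 : T s g y ≤ T s (g' + fun _ => c) y :=
      hmono s hs g hg _ hsum (fun z => by simpa using hle z) y
    have h2 : T s (g' + fun _ => c) y ≤ T s g' y + T s (fun _ => c) y :=
      hsub s hs g' hg' _ (hconst c) y
    have h3 : T s (fun _ => c) y ≤ c := by
      have hh : (fun _ : Fin d → ℝ => c) = c • (fun _ : Fin d → ℝ => (1:ℝ)) := by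
        funext z; simp
      rw [hh, hhom s hs _ (hconst 1) c hc]
      simp only [Pi.smul_apply, smul_eq_mul]
      calc c * T s (fun _ => (1:ℝ)) y ≤ c * 1 :=
            mul_le_mul_of_nonneg_left (hone s hs y) hc
        _ = c := mul_one c
    linarith
  -- uniform boundedness is preserved
  have hTb : ∀ g ∈ H, ∀ C : ℝ, (∀ y, |g y| ≤ C) → ∀ s, 0 ≤ s → ∀ y, |T s g y| ≤ C := by
    intro g hg C hC s hs y
    have hC0 : 0 ≤ C := le_trans (abs_nonneg _) (hC (fun _ => 0))
    have hT0 : T s (fun _ => (0:ℝ)) = fun _ => (0:ℝ) := by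
      have h00 : (fun _ : Fin d → ℝ => (0:ℝ)) = (0:ℝ) • g := by funext z; simp
      rw [h00, hhom s hs g hg 0 le_rfl]
      funext z; simp
    have hup : T s g y ≤ T s (fun _ => (0:ℝ)) y + C :=
      key2 s hs g hg _ (hconst 0) C hC0 (fun z => by
        have := (abs_le.1 (hC z)).2; simpa using this) y
    have hdn : T s (fun _ => (0:ℝ)) y ≤ T s g y + C :=
      key2 s hs _ (hconst 0) g hg C hC0 (fun z => by
        have := (abs_le.1 (hC z)).1; simp; linarith) y
    rw [hT0] at hup hdn
    simp at hup hdn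
    rw [abs_le]
    constructor <;> linarith
  -- constants
  obtain ⟨CA, hCA⟩ := hbd Af hAf
  have hCA0 : 0 ≤ CA := le_trans (abs_nonneg _) (hCA (fun _ => 0))
  set L : ℝ := CA + 1 with hLdef
  have hL : 0 < L := by linarith
  -- small-time Lipschitz bound
  obtain ⟨δ₁, hδ₁pos, hδ₁⟩ := hgen 1 one_pos
  have hLip : ∀ h : ℝ, 0 < h → h < δ₁ → ∀ y, f y - L*h ≤ T h f y ∧ T h f y ≤ f y + L*h := by
    intro h hh hhδ y
    have h1 := abs_le.1 (hδ₁ h hh hhδ y)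
    have h2 := abs_le.1 (hCA y)
    have e : (T h f y - f y) / h * h = T h f y - f y := div_mul_cancel₀ _ (ne_of_gt hh)
    constructor <;> nlinarith [h1.1, h1.2, h2.1, h2.2]
  -- quantitative generator bound
  have hGen : ∀ ε > (0:ℝ), ∃ δ > (0:ℝ), ∀ h : ℝ, 0 < h → h < δ → ∀ y,
      T h f y - f y ≤ h * (Af y + ε) ∧ f y - T h f y ≤ h * (-Af y + ε) := by
    intro ε hε
    obtain ⟨δ, hδpos, hδ⟩ := hgen ε hε
    refine ⟨δ, hδpos, fun h hh hhδ y => ?_⟩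
    have h1 := abs_le.1 (hδ h hh hhδ y)
    have e : (T h f y - f y) / h * h = T h f y - f y := div_mul_cancel₀ _ (ne_of_gt hh)
    constructor <;> nlinarith [h1.1, h1.2]
  -- Step B0 : `T h (±Af) ≳ ±Af` for small `h`, uniformly
  have hB0 : ∀ ε > (0:ℝ), ∃ δ > (0:ℝ), ∀ h : ℝ, 0 < h → h < δ →
      (∀ y, Af y ≤ T h Af y + ε) ∧ (∀ y, -Af y ≤ T h (-Af) y + ε) := by
    intro ε hε
    obtain ⟨δ₂, hδ₂pos, hδ₂⟩ := hgen (ε/4) (by linarith)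
    set v : ℝ := min δ₂ δ₁ / 2 with hvdef
    have hv0 : 0 < v := by positivity
    have hvδ₂ : v < δ₂ := by
      have h1 : min δ₂ δ₁ ≤ δ₂ := min_le_left _ _
      have h2 : v ≤ δ₂ / 2 := by rw [hvdef]; linarith
      linarith [half_lt_self hδ₂pos]
    set w : ((Fin d → ℝ) → ℝ) := T v f - f with hwdef
    have hwH : w ∈ H := hsub_mem _ (hmap v hv0.le f hf) f hf
    have hw'H : -w ∈ H := hneg_mem w hwH
    have hgv : ∀ y, |w y - v * Af y| ≤ v * (ε/4) := by
      intro y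
      have h1 := hδ₂ v hv0 hvδ₂ y
      have e : (T v f y - f y)/v * v = T v f y - f y := div_mul_cancel₀ _ (ne_of_gt hv0)
      have e : (T v f y - f y)/v * v = T v f y - f y := div_mul_cancel₀ _ (ne_of_gt hv0)
      have h2 := abs_le.1 h1
      rw [abs_le]
      simp only [hwdef, Pi.sub_apply]
      constructor <;> nlinarith [h2.1, h2.2, e, hv0.le]
    refine ⟨min δ₁ (ε * v / (4*L)), by positivity, fun h hh hhδ => ?_⟩
    have hh1 : h < δ₁ := lt_of_lt_of_le hhδ (min_le_left _ _)
    have hh2 : 2*L*h ≤ v*ε/2 := by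
      have : h ≤ ε * v / (4*L) := le_of_lt (lt_of_lt_of_le hhδ (min_le_right _ _))
      rw [le_div_iff₀ (by positivity : (0:ℝ) < 4*L)] at this
      nlinarith
    have hLip' := hLip h hh hh1
    have hThf : T h f ∈ H := hmap h hh.le f hf
    -- T (v+h) f bounds
    have hTvh : T (v+h) f = T v (T h f) := hsemi v hv0.le h hh.le f hf
    have hTvh' : T (h+v) f = T h (T v f) := hsemi h hh.le v hv0.le f hf
    have hcomm : T (h+v) f = T (v+h) f := by rw [add_comm]
    have hup : ∀ y, T (v+h) f y ≤ T v f y + L*h := by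
      rw [hTvh]
      exact key2 v hv0.le (T h f) hThf f hf (L*h) (by positivity)
        (fun z => by linarith [(hLip' z).2])
    have hdn : ∀ y, T v f y ≤ T (v+h) f y + L*h := by
      rw [hTvh]
      exact key2 v hv0.le f hf (T h f) hThf (L*h) (by positivity)
        (fun z => by linarith [(hLip' z).1])
    -- splitting inequalities
    have hsplit : ∀ y, T (h+v) f y ≤ T h w y + T h f y := by
      rw [hTvh']
      intro y
      have hdecomp : T v f = w + f := by funext z; simp [hwdef]
      rw [hdecomp]
      exact hsub h hh.le w hwH f hf y
    have hsplit' : ∀ y, T h f y ≤ T h (-w) y + T (h+v) f y := by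
      rw [hTvh']
      intro y
      have hdecomp : f = -w + T v f := by funext z; simp [hwdef]
      conv_lhs => rw [hdecomp]
      exact hsub h hh.le (-w) hw'H (T v f) (hmap v hv0.le f hf) y
    have hwy : ∀ z, w z = T v f z - f z := fun z => rfl
    have hwny : ∀ z, (-w) z = f z - T v f z := by
      intro z; simp only [Pi.neg_apply, hwy]; ring
    constructor
    · intro y
      have hwlow : w y ≤ T h w y + 2*L*h := by
        have h0 := hsplit y
        rw [hcomm] at h0
        have h1 := hdn y
        have h2 := (hLip' y).2
        rw [hwy]
        linarith
      have hwup : T h w y ≤ v * T h Af y + v*(ε/4) := by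
        have hkey := key2 h hh.le w hwH (v • Af) (hsmul_mem Af hAf v) (v*(ε/4))
          (by positivity) (fun z => by
            have h3 := (abs_le.1 (hgv z)).2
            simp only [Pi.smul_apply, smul_eq_mul]
            linarith) y
        rw [hhom h hh.le Af hAf v hv0.le] at hkey
        simpa using hkey
      have hAfw := (abs_le.1 (hgv y)).1
      nlinarith [hwlow, hwup, hAfw, hh2, hv0]
    · intro y
      have hwlow : -(w y) ≤ T h (-w) y + 2*L*h := by
        have h0 := hsplit' y
        rw [hcomm] at h0
        have h1 := hup y
        have h2 := (hLip' y).1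
        rw [hwy]
        linarith
      have hwup : T h (-w) y ≤ v * T h (-Af) y + v*(ε/4) := by
        have hkey := key2 h hh.le (-w) hw'H (v • (-Af)) (hsmul_mem _ (hneg_mem Af hAf) v)
          (v*(ε/4)) (by positivity) (fun z => by
            have h3 := (abs_le.1 (hgv z)).1
            simp only [Pi.smul_apply, Pi.neg_apply, smul_eq_mul]
            linarith) y
        rw [hhom h hh.le (-Af) (hneg_mem Af hAf) v hv0.le] at hkey
        simpa using hkey
      have hAfw := (abs_le.1 (hgv y)).2
      nlinarith [hwlow, hwup, hAfw, hh2, hv0]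
  -- Step B : right lower semicontinuity in time, uniformly
  have hBB : ∀ ε > (0:ℝ), ∃ δ > (0:ℝ), ∀ s, 0 ≤ s → ∀ h : ℝ, 0 < h → h < δ → ∀ y,
      T s Af y ≤ T (s+h) Af y + ε ∧ T s (-Af) y ≤ T (s+h) (-Af) y + ε := by
    intro ε hε
    obtain ⟨δ, hδpos, hδ⟩ := hB0 ε hε
    refine ⟨δ, hδpos, fun s hs h hh hhδ y => ?_⟩
    obtain ⟨hp, hm⟩ := hδ h hh hhδ
    have e1 : T (s+h) Af = T s (T h Af) := hsemi s hs h hh.le Af hAf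
    have e2 : T (s+h) (-Af) = T s (T h (-Af)) := hsemi s hs h hh.le (-Af) (hneg_mem Af hAf)
    constructor
    · rw [e1]
      exact key2 s hs Af hAf (T h Af) (hmap h hh.le Af hAf) ε hε.le hp y
    · rw [e2]
      exact key2 s hs (-Af) (hneg_mem Af hAf) (T h (-Af))
        (hmap h hh.le _ (hneg_mem Af hAf)) ε hε.le hm y
  -- Step D : one-sided difference quotients
  have hDD : ∀ ε > (0:ℝ), ∃ δ > (0:ℝ), ∀ s, 0 ≤ s → ∀ h : ℝ, 0 < h → h < δ → ∀ y,
      T (s+h) f y - T s f y ≤ h * (T s Af y + ε) ∧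
      T s f y - T (s+h) f y ≤ h * (T s (-Af) y + ε) := by
    intro ε hε
    obtain ⟨δ, hδpos, hδ⟩ := hGen ε hε
    refine ⟨δ, hδpos, fun s hs h hh hhδ y => ?_⟩
    have hThf := hmap h hh.le f hf
    have e1 : T (s+h) f = T s (T h f) := hsemi s hs h hh.le f hf
    have hd1 : T h f - f ∈ H := hsub_mem _ hThf f hf
    have hd2 : f - T h f ∈ H := hsub_mem f hf _ hThf
    constructor
    · have hs1 : T s (T h f) y ≤ T s (T h f - f) y + T s f y := by
        have hde : T h f = (T h f - f) + f := by funext z; simp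
        conv_lhs => rw [hde]
        exact hsub s hs _ hd1 f hf y
      have hs2 : T s (T h f - f) y ≤ h * T s Af y + h*ε := by
        have hkey := key2 s hs _ hd1 (h • Af) (hsmul_mem Af hAf h) (h*ε) (by positivity)
          (fun z => by
            have h3 := (hδ h hh hhδ z).1
            simp only [Pi.sub_apply, Pi.smul_apply, smul_eq_mul]
            linarith) y
        rw [hhom s hs Af hAf h hh.le] at hkey
        simpa using hkey
      rw [e1]
      nlinarith [hs1, hs2]
    · have hs1 : T s f y ≤ T s (f - T h f) y + T s (T h f) y := by
        have hde : f = (f - T h f) + T h f := by funext z; simp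
        conv_lhs => rw [hde]
        exact hsub s hs _ hd2 _ hThf y
      have hs2 : T s (f - T h f) y ≤ h * T s (-Af) y + h*ε := by
        have hkey := key2 s hs _ hd2 (h • (-Af)) (hsmul_mem _ (hneg_mem Af hAf) h) (h*ε)
          (by positivity) (fun z => by
            have h3 := (hδ h hh hhδ z).2
            simp only [Pi.sub_apply, Pi.smul_apply, Pi.neg_apply, smul_eq_mul]
            linarith) y
        rw [hhom s hs (-Af) (hneg_mem Af hAf) h hh.le] at hkey
        simpa using hkey
      rw [e1]
      nlinarith [hs1, hs2]
  -- now fix t and x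
  intro t ht x
  set Φp : ℝ → ℝ := fun s => T (max s 0) Af x with hΦp
  set Φm : ℝ → ℝ := fun s => T (max s 0) (-Af) x with hΦm
  have hCAneg : ∀ y, |(-Af) y| ≤ CA := fun y => by
    simpa [Pi.neg_apply, abs_neg] using hCA y
  have hΦpb : ∀ s, |Φp s| ≤ CA := fun s => hTb Af hAf CA hCA _ (le_max_right _ _) x
  have hΦmb : ∀ s, |Φm s| ≤ CA :=
    fun s => hTb _ (hneg_mem Af hAf) CA hCAneg _ (le_max_right _ _) x
  have hmeasp : Measurable Φp := by
    apply SDF.measurable_of_right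
    intro ε hε u
    obtain ⟨δ, hδpos, hδ⟩ := hBB ε hε
    by_cases hu : 0 ≤ u
    · refine ⟨min δ 1, by positivity, fun r h1 h2 => ?_⟩
      have h2' : r < u + δ := lt_of_lt_of_le h2 (by
        have := min_le_left δ (1:ℝ); linarith)
      have hstep := (hδ u hu (r - u) (by linarith) (by linarith) x).1
      have e1 : max u 0 = u := max_eq_left hu
      have e2 : max r 0 = r := max_eq_left (by linarith)
      rw [show u + (r - u) = r by ring] at hstep
      simp only [hΦp, e1, e2]
      linarith
    · push_neg at hu
      refine ⟨-u, by linarith, fun r h1 h2 => ?_⟩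
      have e1 : max u 0 = 0 := max_eq_right (by linarith)
      have e2 : max r 0 = 0 := max_eq_right (by linarith)
      simp only [hΦp, e1, e2]
      linarith
  have hmeasm : Measurable Φm := by
    apply SDF.measurable_of_right
    intro ε hε u
    obtain ⟨δ, hδpos, hδ⟩ := hBB ε hε
    by_cases hu : 0 ≤ u
    · refine ⟨min δ 1, by positivity, fun r h1 h2 => ?_⟩
      have h2' : r < u + δ := lt_of_lt_of_le h2 (by
        have := min_le_left δ (1:ℝ); linarith)
      have hstep := (hδ u hu (r - u) (by linarith) (by linarith) x).2
      have e1 : max u 0 = u := max_eq_left hu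
      have e2 : max r 0 = r := max_eq_left (by linarith)
      rw [show u + (r - u) = r by ring] at hstep
      simp only [hΦm, e1, e2]
      linarith
    · push_neg at hu
      refine ⟨-u, by linarith, fun r h1 h2 => ?_⟩
      have e1 : max u 0 = 0 := max_eq_right (by linarith)
      have e2 : max r 0 = 0 := max_eq_right (by linarith)
      simp only [hΦm, e1, e2]
      linarith
  -- apply the main lemma, upper bound
  have hbup : ∀ ε > (0:ℝ), ∃ δ > (0:ℝ), ∀ s, 0 ≤ s → ∀ h, 0 < h → h < δ →
      Φp s - ε ≤ Φp (s+h) ∧ (fun s => T s f x) (s+h) - (fun s => T s f x) s ≤ h * (Φp s + ε) := by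
    intro ε hε
    obtain ⟨δB, hδB, hB⟩ := hBB ε hε
    obtain ⟨δD, hδD, hD⟩ := hDD ε hε
    refine ⟨min δB δD, lt_min hδB hδD, fun s hs h hh hhδ => ?_⟩
    have hhB : h < δB := lt_of_lt_of_le hhδ (min_le_left _ _)
    have hhD : h < δD := lt_of_lt_of_le hhδ (min_le_right _ _)
    have e1 : max s 0 = s := max_eq_left hs
    have e2 : max (s+h) 0 = s+h := max_eq_left (by linarith)
    constructor
    · have := (hB s hs h hh hhB x).1
      simp only [hΦp, e1, e2]
      linarith
    · have := (hD s hs h hh hhD x).1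
      simp only [hΦp, e1]
      linarith
  have hbdn : ∀ ε > (0:ℝ), ∃ δ > (0:ℝ), ∀ s, 0 ≤ s → ∀ h, 0 < h → h < δ →
      Φm s - ε ≤ Φm (s+h) ∧
      (fun s => -(T s f x)) (s+h) - (fun s => -(T s f x)) s ≤ h * (Φm s + ε) := by
    intro ε hε
    obtain ⟨δB, hδB, hB⟩ := hBB ε hε
    obtain ⟨δD, hδD, hD⟩ := hDD ε hε
    refine ⟨min δB δD, lt_min hδB hδD, fun s hs h hh hhδ => ?_⟩
    have hhB : h < δB := lt_of_lt_of_le hhδ (min_le_left _ _)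
    have hhD : h < δD := lt_of_lt_of_le hhδ (min_le_right _ _)
    have e1 : max s 0 = s := max_eq_left hs
    have e2 : max (s+h) 0 = s+h := max_eq_left (by linarith)
    constructor
    · have := (hB s hs h hh hhB x).2
      simp only [hΦm, e1, e2]
      linarith
    · have := (hD s hs h hh hhD x).2
      simp only [hΦm, e1]
      linarith
  have hFup := SDF.main (fun s => T s f x) Φp hmeasp CA hΦpb hbup t ht
  have hFdn := SDF.main (fun s => -(T s f x)) Φm hmeasm CA hΦmb hbdn t ht
  beta_reduce at hFup hFdn
  rw [hid f hf] at hFup hFdn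
  have hIp : (∫ s in (0:ℝ)..t, Φp s) = ∫ s in (0:ℝ)..t, T s Af x := by
    apply intervalIntegral.integral_congr
    intro r hr
    rw [Set.uIcc_of_le ht] at hr
    simp only [hΦp, max_eq_left hr.1]
  have hIm : (∫ s in (0:ℝ)..t, Φm s) = ∫ s in (0:ℝ)..t, T s (-Af) x := by
    apply intervalIntegral.integral_congr
    intro r hr
    rw [Set.uIcc_of_le ht] at hr
    simp only [hΦm, max_eq_left hr.1]
  rw [hIp] at hFup
  rw [hIm] at hFdn
  constructor
  · linarith
  · linarith
end

section
/- For the sublinear Markov semigroup T_t f(x) := sup_{|s| ≤ t} f(x+s) on C_b^{uc}(R), every f ∈ C_b^2(R) (twice continuously differentiable with bounded f, f', f'') satisfies lim_{t↓0} ||(T_t f − f)/t − |f'| ||_∞ = 0; in particular C_b^2(R) is contained in the domain of the strong generator A and Af = |f'| for f ∈ C_b^2(R). -/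
open Filter Topology

/-- The sublinear operator `T_t f(x) = sup_{|s| ≤ t} f(x+s)`. -/
noncomputable def shiftSup (t : ℝ) (f : ℝ → ℝ) (x : ℝ) : ℝ :=
  sSup ((fun s => f (x + s)) '' Set.Icc (-t) t)

/-- Second-order Taylor-type bound from a bound on the second derivative. -/
lemma taylor_bound (f : ℝ → ℝ) (hf : ContDiff ℝ 2 f) (C₂ : ℝ)
    (hb2 : ∀ x, |deriv (deriv f) x| ≤ C₂) (x s t : ℝ) (hs : |s| ≤ t) :
    |f (x + s) - f x - s * deriv f x| ≤ C₂ * t * t := by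
  have hd1 : ContDiff ℝ 1 (deriv f) := by
    have h2 : ContDiff ℝ ((1:ℕ∞)+1) f := hf
    rw [contDiff_succ_iff_deriv] at h2
    exact h2.2.2
  have hdf : Differentiable ℝ f := hf.differentiable (by norm_num)
  -- deriv f is C₂-Lipschitz
  have hlip : ∀ a b : ℝ, |deriv f a - deriv f b| ≤ C₂ * |a - b| := by
    intro a b
    have := Convex.norm_image_sub_le_of_norm_deriv_le
      (f := deriv f) (s := Set.univ) (C := C₂)
      (fun y _ => (hd1.differentiable (by norm_num)) y)
      (fun y _ => hb2 y) convex_univ (Set.mem_univ b) (Set.mem_univ a)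
    simpa [Real.norm_eq_abs] using this
  -- apply MVT-type estimate to g u = f (x + u) - u * deriv f x on Icc (-t) t
  set g : ℝ → ℝ := fun u => f (x + u) - u * deriv f x with hg
  have hgd : ∀ u : ℝ, HasDerivAt g (deriv f (x + u) - deriv f x) u := by
    intro u
    have h1 : HasDerivAt (fun u : ℝ => f (x + u)) (deriv f (x + u)) u := by
      have := ((hdf (x + u)).hasDerivAt).comp u
        ((hasDerivAt_id u).const_add x)
      simpa [Function.comp_def] using this
    have := h1.sub ((hasDerivAt_id u).const_mul (deriv f x))
    simpa [hg, mul_comm, Pi.sub_def] using this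
  have ht0 : 0 ≤ t := le_trans (abs_nonneg s) hs
  have hsmem : s ∈ Set.Icc (-t) t := abs_le.mp hs
  have h0mem : (0:ℝ) ∈ Set.Icc (-t) t := ⟨by linarith, ht0⟩
  have key := Convex.norm_image_sub_le_of_norm_deriv_le
    (f := g) (s := Set.Icc (-t) t) (C := C₂ * t)
    (fun y _ => (hgd y).differentiableAt)
    (fun y hy => by
      rw [(hgd y).deriv]
      have := hlip (x + y) x
      have hy' : |y| ≤ t := abs_le.mpr ⟨hy.1, hy.2⟩
      have hC₂ : 0 ≤ C₂ := le_trans (abs_nonneg _) (hb2 0)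
      calc ‖deriv f (x + y) - deriv f x‖ ≤ C₂ * |x + y - x| := by
            simpa [Real.norm_eq_abs] using this
        _ = C₂ * |y| := by ring_nf
        _ ≤ C₂ * t := by nlinarith)
    (convex_Icc _ _) h0mem hsmem
  have : ‖g s - g 0‖ ≤ C₂ * t * ‖s - 0‖ := key
  have habs : |f (x + s) - f x - s * deriv f x| ≤ C₂ * t * |s| := by
    have h' : |f (x + s) - s * deriv f x - f x| ≤ C₂ * t * |s| := by
      simpa [hg, Real.norm_eq_abs] using this
    calc |f (x + s) - f x - s * deriv f x|
        = |f (x + s) - s * deriv f x - f x| := by ring_nf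
      _ ≤ C₂ * t * |s| := h'
  have hC₂ : 0 ≤ C₂ := le_trans (abs_nonneg _) (hb2 0)
  refine le_trans habs ?_
  nlinarith [mul_le_mul_of_nonneg_left hs (mul_nonneg hC₂ ht0)]

/-- for the sublinear Markov semigroup `T_t f(x) = sup_{|s| ≤ t} f(x+s)` on
`C_b^{uc}(ℝ)`, every `f ∈ C_b²(ℝ)` satisfies `lim_{t↓0} ‖(T_t f - f)/t - |f'|‖_∞ = 0`;
in particular `C_b²(ℝ)` is contained in the domain of the strong generator `A` and
`Af = |f'|` there. -/
theorem shiftSup_generator_on_Cb2 (f : ℝ → ℝ)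
    (hf : ContDiff ℝ 2 f)
    (hb0 : ∃ C, ∀ x, |f x| ≤ C)
    (hb1 : ∃ C, ∀ x, |deriv f x| ≤ C)
    (hb2 : ∃ C, ∀ x, |deriv (deriv f) x| ≤ C) :
    ∀ ε > (0 : ℝ), ∃ δ > (0 : ℝ), ∀ t, 0 < t → t < δ →
      ∀ x, |(shiftSup t f x - f x) / t - abs (deriv f x)| ≤ ε := by
  obtain ⟨C₂, hC₂⟩ := hb2
  have hC₂0 : 0 ≤ C₂ := le_trans (abs_nonneg _) (hC₂ 0)
  intro ε hε
  refine ⟨ε / (C₂ + 1), by positivity, ?_⟩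
  intro t ht htδ x
  have ht0 : 0 ≤ t := ht.le
  -- Taylor bound for all |s| ≤ t
  have htay : ∀ s : ℝ, |s| ≤ t →
      |f (x + s) - f x - s * deriv f x| ≤ C₂ * t * t :=
    fun s hs => taylor_bound f hf C₂ hC₂ x s t hs
  set S := (fun s => f (x + s)) '' Set.Icc (-t) t with hS
  have hshift : shiftSup t f x = sSup S := rfl
  have hne : S.Nonempty := ⟨f (x + 0), ⟨0, ⟨by linarith, ht0⟩, rfl⟩⟩
  have hub : ∀ y ∈ S, y ≤ f x + t * |deriv f x| + C₂ * t * t := by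
    rintro y ⟨s, hs, rfl⟩
    have hs' : |s| ≤ t := abs_le.mpr ⟨hs.1, hs.2⟩
    have h1 := (abs_le.mp (htay s hs')).2
    have h2 : s * deriv f x ≤ |s| * |deriv f x| := by
      calc s * deriv f x ≤ |s * deriv f x| := le_abs_self _
        _ = |s| * |deriv f x| := abs_mul _ _
    have h3 : |s| * |deriv f x| ≤ t * |deriv f x| := by
      have := abs_nonneg (deriv f x); nlinarith
    linarith
  have hbdd : BddAbove S := ⟨_, hub⟩
  -- upper bound on sSup
  have hsup_le : shiftSup t f x ≤ f x + t * |deriv f x| + C₂ * t * t := by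
    rw [hshift]; exact csSup_le hne hub
  -- lower bound: take s = t * sign
  have hlow : f x + t * |deriv f x| - C₂ * t * t ≤ shiftSup t f x := by
    rcases le_or_gt 0 (deriv f x) with h | h
    · have hmem : f (x + t) ∈ S := ⟨t, ⟨by linarith, le_rfl⟩, rfl⟩
      have := (abs_le.mp (htay t (le_of_eq (abs_of_nonneg ht0)))).1
      have habs : |deriv f x| = deriv f x := abs_of_nonneg h
      have hle := le_csSup hbdd hmem
      rw [habs, hshift]
      linarith
    · have hmem : f (x + -t) ∈ S := ⟨-t, ⟨le_rfl, by linarith⟩, rfl⟩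
      have := (abs_le.mp (htay (-t) (le_of_eq (by rw [abs_neg, abs_of_nonneg ht0])))).1
      have habs : |deriv f x| = -(deriv f x) := abs_of_neg h
      have hle := le_csSup hbdd hmem
      rw [habs, hshift]
      linarith
  -- combine
  have hdiff : |(shiftSup t f x - f x) / t - abs (deriv f x)| ≤ C₂ * t := by
    rw [abs_le]
    constructor
    · have h1 : (|deriv f x| - C₂ * t) * t ≤ shiftSup t f x - f x := by nlinarith [hlow]
      have h2 : |deriv f x| - C₂ * t ≤ (shiftSup t f x - f x) / t := (le_div_iff₀ ht).mpr h1
      linarith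
    · have h1 : shiftSup t f x - f x ≤ (C₂ * t + |deriv f x|) * t := by nlinarith [hsup_le]
      have h2 : (shiftSup t f x - f x) / t ≤ C₂ * t + |deriv f x| := (div_le_iff₀ ht).mpr h1
      linarith
  have : C₂ * t ≤ ε := by
    have h1 : C₂ * t ≤ C₂ * (ε / (C₂ + 1)) := by nlinarith
    have h2 : C₂ * (ε / (C₂ + 1)) ≤ ε := by
      rw [mul_div_assoc']
      rw [div_le_iff₀ (by positivity)]
      nlinarith
    linarith
  linarith
end

section
/- There exists a sublinear Markov semigroup (T_t)_{t≥0} (namely T_t f(x) = sup_{|s|≤t} f(x+s) on C_b^{uc}(R)) and a function f in the domain D(A) of its strong generator such that T_1 f ∉ D(A); in particular the domain of the strong generator of a sublinear Markov semigroup need not be invariant under the semigroup. -/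
open Filter Topology

/-- Bounded uniformly continuous functions on ℝ. -/
def IsBUC (f : ℝ → ℝ) : Prop := UniformContinuous f ∧ ∃ C, ∀ x, |f x| ≤ C

/-- `f` belongs to the domain of the strong generator of the semigroup
`T_t f(x) = sup_{|s|≤t} f(x+s)` on `C_b^{uc}(ℝ)`: `(T_t f - f)/t` converges uniformly
to some `g ∈ C_b^{uc}(ℝ)` as `t ↓ 0`. -/
def InStrongDomain (f : ℝ → ℝ) : Prop :=
  IsBUC f ∧ ∃ g : ℝ → ℝ, IsBUC g ∧
    ∀ ε > (0 : ℝ), ∃ δ > (0 : ℝ), ∀ t, 0 < t → t < δ →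
      ∀ x, |(shiftSup t f x - f x) / t - g x| ≤ ε

open Set

/-- piecewise C^{1,1} function -/
noncomputable def fe (x : ℝ) : ℝ :=
  if x ≤ -3 then 5/2
  else if x ≤ -2 then 5/2 - (x+3)^2/2
  else if x ≤ -1 then -x
  else if x ≤ 0 then 1 - (x+1) + (5/6)*(x+1)^2
  else if x ≤ 1/2 then 5/6 + (2/3)*(x - x^2)
  else 1

noncomputable def de (x : ℝ) : ℝ :=
  if x ≤ -3 then 0
  else if x ≤ -2 then -(x+3)
  else if x ≤ -1 then -1
  else if x ≤ 0 then (5/3)*x + 2/3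
  else if x ≤ 1/2 then 2/3 - (4/3)*x
  else 0

lemma glueDeriv {F G dF dG : ℝ → ℝ} {a : ℝ}
    (hF : ∀ x, HasDerivAt F (dF x) x) (hG : ∀ x, HasDerivAt G (dG x) x)
    (hval : F a = G a) (hder : dF a = dG a) (x : ℝ) :
    HasDerivAt (fun y => if y ≤ a then F y else G y)
      (if x ≤ a then dF x else dG x) x := by
  rcases lt_trichotomy x a with h | h | h
  · rw [if_pos h.le]
    apply (hF x).congr_of_eventuallyEq
    filter_upwards [Iio_mem_nhds h] with y hy
    rw [if_pos (Set.mem_Iio.mp hy).le]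
  · subst h
    rw [if_pos le_rfl]
    have h1 : HasDerivWithinAt (fun y => if y ≤ x then F y else G y) (dF x) (Set.Iic x) x := by
      apply ((hF x).hasDerivWithinAt).congr (fun y hy => by simp [Set.mem_Iic.mp hy])
      simp
    have h2 : HasDerivWithinAt (fun y => if y ≤ x then F y else G y) (dF x) (Set.Ici x) x := by
      rw [hder]
      apply ((hG x).hasDerivWithinAt).congr ?_ (by simp [hval])
      intro y hy
      by_cases hyx : y ≤ x
      · have : y = x := le_antisymm hyx hy
        simp [this, hval]
      · simp [hyx]
    have h3 := h1.union h2
    rw [Set.Iic_union_Ici] at h3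
    exact h3.hasDerivAt Filter.univ_mem
  · rw [if_neg (not_le.2 h)]
    apply (hG x).congr_of_eventuallyEq
    filter_upwards [Ioi_mem_nhds h] with y hy
    rw [if_neg (not_le.2 (Set.mem_Ioi.mp hy))]

lemma fe_hasDeriv (x : ℝ) : HasDerivAt fe (de x) x := by
  have p1 : ∀ x : ℝ, HasDerivAt (fun y : ℝ => 5/2 - (y+3)^2/2) (-(x+3)) x := by
    intro x
    have h := ((((hasDerivAt_id x).add_const 3).pow 2).div_const 2).const_sub (5/2 : ℝ)
    exact h.congr_deriv (by norm_num)
  have p2 : ∀ x : ℝ, HasDerivAt (fun y : ℝ => -y) (-1 : ℝ) x := fun x => (hasDerivAt_id x).neg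
  have p3 : ∀ x : ℝ, HasDerivAt (fun y : ℝ => 1 - (y+1) + (5/6)*(y+1)^2) ((5/3)*x + 2/3) x := by
    intro x
    have h := (((hasDerivAt_id x).add_const 1).const_sub (1:ℝ)).add
      ((((hasDerivAt_id x).add_const 1).pow 2).const_mul (5/6 : ℝ))
    exact h.congr_deriv (by norm_num; ring)
  have p4 : ∀ x : ℝ, HasDerivAt (fun y : ℝ => 5/6 + (2/3)*(y - y^2)) (2/3 - (4/3)*x) x := by
    intro x
    have h := (((hasDerivAt_id x).sub ((hasDerivAt_id x).pow 2)).const_mul (2/3:ℝ)).const_add (5/6:ℝ)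
    exact h.congr_deriv (by norm_num; ring)
  have p0 : ∀ x : ℝ, HasDerivAt (fun _ : ℝ => (5/2 : ℝ)) (0:ℝ) x := fun x => hasDerivAt_const x _
  have p5 : ∀ x : ℝ, HasDerivAt (fun _ : ℝ => (1 : ℝ)) (0:ℝ) x := fun x => hasDerivAt_const x _
  have g45 : ∀ x : ℝ, HasDerivAt (fun y => if y ≤ (1/2:ℝ) then 5/6 + (2/3)*(y - y^2) else 1)
      (if x ≤ (1/2:ℝ) then 2/3 - (4/3)*x else 0) x :=
    glueDeriv p4 p5 (by norm_num) (by norm_num)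
  have g35 : ∀ x : ℝ, HasDerivAt
      (fun y => if y ≤ (0:ℝ) then 1 - (y+1) + (5/6)*(y+1)^2
        else if y ≤ (1/2:ℝ) then 5/6 + (2/3)*(y - y^2) else 1)
      (if x ≤ (0:ℝ) then (5/3)*x + 2/3 else if x ≤ (1/2:ℝ) then 2/3 - (4/3)*x else 0) x :=
    glueDeriv p3 g45 (by norm_num) (by norm_num)
  have g25 : ∀ x : ℝ, HasDerivAt
      (fun y => if y ≤ (-1:ℝ) then -y
        else if y ≤ (0:ℝ) then 1 - (y+1) + (5/6)*(y+1)^2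
        else if y ≤ (1/2:ℝ) then 5/6 + (2/3)*(y - y^2) else 1)
      (if x ≤ (-1:ℝ) then -1
        else if x ≤ (0:ℝ) then (5/3)*x + 2/3 else if x ≤ (1/2:ℝ) then 2/3 - (4/3)*x else 0) x :=
    glueDeriv p2 g35 (by norm_num) (by norm_num)
  have g15 : ∀ x : ℝ, HasDerivAt
      (fun y => if y ≤ (-2:ℝ) then 5/2 - (y+3)^2/2
        else if y ≤ (-1:ℝ) then -y
        else if y ≤ (0:ℝ) then 1 - (y+1) + (5/6)*(y+1)^2
        else if y ≤ (1/2:ℝ) then 5/6 + (2/3)*(y - y^2) else 1)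
      (if x ≤ (-2:ℝ) then -(x+3)
        else if x ≤ (-1:ℝ) then -1
        else if x ≤ (0:ℝ) then (5/3)*x + 2/3 else if x ≤ (1/2:ℝ) then 2/3 - (4/3)*x else 0) x :=
    glueDeriv p1 g25 (by norm_num) (by norm_num)
  exact glueDeriv p0 g15 (by norm_num) (by norm_num) x

lemma glueLip {F G : ℝ → ℝ} {a K : ℝ}
    (hF : ∀ x y, |F x - F y| ≤ K * |x - y|) (hG : ∀ x y, |G x - G y| ≤ K * |x - y|)
    (hval : F a = G a) :
    ∀ x y, |(if x ≤ a then F x else G x) - (if y ≤ a then F y else G y)| ≤ K * |x - y| := by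
  have key : ∀ x y, x ≤ a → a < y → |F x - G y| ≤ K * |x - y| := by
    intro x y hx hy
    have h1 := hF x a
    have h2 := hG a y
    have e : F x - G y = (F x - F a) + (G a - G y) := by rw [hval]; ring
    have h3 : |F x - G y| ≤ |F x - F a| + |G a - G y| := by rw [e]; exact abs_add_le _ _
    have e1 : |x - a| = a - x := by rw [abs_of_nonpos (by linarith)]; ring
    have e2 : |a - y| = y - a := by rw [abs_of_nonpos (by linarith)]; ring
    have e3 : |x - y| = y - x := by rw [abs_of_nonpos (by linarith)]; ring
    rw [e1] at h1; rw [e2] at h2; rw [e3]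
    nlinarith [abs_nonneg (F x - F a), abs_nonneg (G a - G y)]
  intro x y
  rcases le_or_gt x a with hx | hx <;> rcases le_or_gt y a with hy | hy
  · simpa [hx, hy] using hF x y
  · rw [if_pos hx, if_neg (not_le.2 hy)]; exact key x y hx hy
  · rw [if_neg (not_le.2 hx), if_pos hy]
    rw [abs_sub_comm, abs_sub_comm x y]; exact key y x hy hx
  · simp only [if_neg (not_le.2 hx), if_neg (not_le.2 hy)]; exact hG x y

lemma linLip {c b K : ℝ} (h : |c| ≤ K) : ∀ x y : ℝ, |(c*x + b) - (c*y + b)| ≤ K * |x - y| := by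
  intro x y
  have e : (c*x + b) - (c*y + b) = c * (x - y) := by ring
  rw [e, abs_mul]
  exact mul_le_mul_of_nonneg_right h (abs_nonneg _)

lemma de_lip : ∀ x y, |de x - de y| ≤ 2 * |x - y| := by
  have l0 : ∀ x y : ℝ, |(0:ℝ) - 0| ≤ 2 * |x - y| := by
    intro x y; simp [abs_nonneg, mul_nonneg]
  have l1 : ∀ x y : ℝ, |(-(x+3)) - (-(y+3))| ≤ 2 * |x - y| := by
    intro x y
    have := linLip (c := -1) (b := -3) (K := 2) (by norm_num) x y
    convert this using 2 <;> ring
  have l2 : ∀ x y : ℝ, |(-1:ℝ) - (-1)| ≤ 2 * |x - y| := by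
    intro x y; simp [abs_nonneg, mul_nonneg]
  have l3 : ∀ x y : ℝ, |((5/3)*x + 2/3) - ((5/3)*y + 2/3)| ≤ 2 * |x - y| :=
    linLip (by rw [abs_of_nonneg] <;> norm_num)
  have l4 : ∀ x y : ℝ, |(2/3 - (4/3)*x) - (2/3 - (4/3)*y)| ≤ 2 * |x - y| := by
    intro x y
    have := linLip (c := -(4/3)) (b := 2/3) (K := 2) (by rw [abs_neg, abs_of_nonneg] <;> norm_num) x y
    convert this using 2 <;> ring
  have g45 := glueLip (a := (1/2:ℝ)) l4 l0 (by norm_num)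
  have g35 := glueLip (a := (0:ℝ)) l3 g45 (by norm_num)
  have g25 := glueLip (a := (-1:ℝ)) l2 g35 (by norm_num)
  have g15 := glueLip (a := (-2:ℝ)) l1 g25 (by norm_num)
  have g05 := glueLip (a := (-3:ℝ)) l0 g15 (by norm_num)
  exact g05

lemma de_bound : ∀ x, |de x| ≤ 1 := by
  intro x
  unfold de
  split_ifs with h1 h2 h3 h4 h5 <;> rw [abs_le] <;> constructor <;>
    first
      | linarith
      | push_neg at * ; linarith

lemma fe_bound : ∀ x, |fe x| ≤ 5/2 := by
  intro x
  unfold fe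
  split_ifs with h1 h2 h3 h4 h5 <;> rw [abs_le] <;> constructor <;>
    (try push_neg at *) <;> nlinarith

lemma fe_taylor : ∀ x s : ℝ, |fe (x+s) - fe x - s * de x| ≤ 2 * s^2 := by
  intro x s
  set φ : ℝ → ℝ := fun u => fe u - u * de x with hφdef
  have hφ : ∀ u, HasDerivAt φ (de u - de x) u := by
    intro u
    have h2 : HasDerivAt (fun u : ℝ => u * de x) (de x) u := by
      simpa using (hasDerivAt_id u).mul_const (de x)
    exact (fe_hasDeriv u).sub h2
  have habs : ∀ u ∈ Set.Icc (x - |s|) (x + |s|), ‖de u - de x‖ ≤ 2 * |s| := by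
    intro u hu
    rw [Real.norm_eq_abs]
    calc |de u - de x| ≤ 2 * |u - x| := de_lip u x
      _ ≤ 2 * |s| := by
          have : |u - x| ≤ |s| := abs_le.2 ⟨by linarith [hu.1], by linarith [hu.2]⟩
          linarith
  have hx : x ∈ Set.Icc (x - |s|) (x + |s|) := by
    constructor <;> linarith [abs_nonneg s]
  have hxs : x + s ∈ Set.Icc (x - |s|) (x + |s|) := by
    constructor <;> linarith [neg_abs_le s, le_abs_self s]
  have key := (convex_Icc (x - |s|) (x + |s|)).norm_image_sub_le_of_norm_hasDerivWithin_le
    (f := φ) (f' := fun u => de u - de x)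
    (fun u _ => (hφ u).hasDerivWithinAt) habs hx hxs
  rw [Real.norm_eq_abs, Real.norm_eq_abs] at key
  have e1 : φ (x+s) - φ x = fe (x+s) - fe x - s * de x := by rw [hφdef]; ring
  have e2 : 2 * |s| * |x + s - x| = 2 * s^2 := by
    have : x + s - x = s := by ring
    rw [this]
    nlinarith [sq_abs s, abs_nonneg s]
  rw [e1, e2] at key
  exact key

lemma fe_lip : ∀ x y, |fe x - fe y| ≤ 1 * |x - y| := by
  intro x y
  have key := convex_univ.norm_image_sub_le_of_norm_hasDerivWithin_le
    (f := fe) (f' := de) (s := Set.univ)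
    (fun u _ => (fe_hasDeriv u).hasDerivWithinAt)
    (fun u _ => by rw [Real.norm_eq_abs]; exact de_bound u)
    (Set.mem_univ y) (Set.mem_univ x)
  rw [Real.norm_eq_abs, Real.norm_eq_abs] at key
  exact key

lemma lip_uc {K : ℝ} {f : ℝ → ℝ} (hK : 0 < K) (h : ∀ x y, |f x - f y| ≤ K * |x - y|) :
    UniformContinuous f := by
  rw [Metric.uniformContinuous_iff]
  intro ε hε
  refine ⟨ε / K, by positivity, fun {a b} hab => ?_⟩
  rw [Real.dist_eq] at *
  calc |f a - f b| ≤ K * |a - b| := h a b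
    _ < K * (ε / K) := by exact mul_lt_mul_of_pos_left hab hK
    _ = ε := by field_simp

lemma fe_upper_est {t : ℝ} (ht : 0 < t) (x : ℝ) :
    ∀ s ∈ Set.Icc (-t) t, fe (x + s) ≤ fe x + t * |de x| + 2 * t^2 := by
  intro s hs
  have h1 := fe_taylor x s
  rw [abs_le] at h1
  have h2 : s * de x ≤ t * |de x| := by
    calc s * de x ≤ |s * de x| := le_abs_self _
      _ = |s| * |de x| := abs_mul _ _
      _ ≤ t * |de x| := by
          have : |s| ≤ t := abs_le.2 ⟨hs.1, hs.2⟩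
          exact mul_le_mul_of_nonneg_right this (abs_nonneg _)
  have h3 : s^2 ≤ t^2 := sq_le_sq' (by linarith [hs.1]) hs.2
  linarith [h1.2]

lemma shiftSup_fe_est {t : ℝ} (ht : 0 < t) (x : ℝ) :
    abs (shiftSup t fe x - fe x - t * |de x|) ≤ 2 * t^2 := by
  have hne : ((fun s => fe (x + s)) '' Set.Icc (-t) t).Nonempty := by
    exact ⟨fe x, ⟨0, ⟨by linarith, by linarith⟩, by simp⟩⟩
  have hub : ∀ v ∈ (fun s => fe (x + s)) '' Set.Icc (-t) t,
      v ≤ fe x + t * |de x| + 2 * t^2 := by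
    rintro v ⟨s, hs, rfl⟩
    exact fe_upper_est ht x s hs
  have hbdd : BddAbove ((fun s => fe (x + s)) '' Set.Icc (-t) t) := ⟨_, hub⟩
  have hupper : shiftSup t fe x ≤ fe x + t * |de x| + 2 * t^2 := csSup_le hne hub
  set s0 : ℝ := if 0 ≤ de x then t else -t with hs0def
  have hs0mem : s0 ∈ Set.Icc (-t) t := by
    rw [hs0def]; split_ifs <;> constructor <;> linarith
  have hs0val : s0 * de x = t * |de x| := by
    rw [hs0def]; split_ifs with h
    · rw [abs_of_nonneg h]
    · push_neg at h; rw [abs_of_neg h]; ring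
  have hs0sq : s0^2 = t^2 := by rw [hs0def]; split_ifs <;> ring
  have hlow : fe x + t * |de x| - 2 * t^2 ≤ shiftSup t fe x := by
    have hmem : fe (x + s0) ∈ (fun s => fe (x + s)) '' Set.Icc (-t) t := ⟨s0, hs0mem, rfl⟩
    have h1 := fe_taylor x s0
    rw [abs_le] at h1
    have := le_csSup hbdd hmem
    rw [hs0val, hs0sq] at h1
    unfold shiftSup
    linarith [h1.1]
  rw [abs_le]
  unfold shiftSup at *
  constructor <;> linarith

lemma fe_in_domain : InStrongDomain fe := by
  refine ⟨⟨lip_uc one_pos fe_lip, ⟨5/2, fe_bound⟩⟩, fun x => |de x|, ⟨?_, ⟨1, fun x => ?_⟩⟩, ?_⟩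
  · apply lip_uc two_pos
    intro x y
    calc abs (|de x| - |de y|) ≤ |de x - de y| := abs_abs_sub_abs_le_abs_sub _ _
      _ ≤ 2 * |x - y| := de_lip x y
  · rw [abs_abs]; exact de_bound x
  · intro ε hε
    refine ⟨ε / 2, by positivity, fun t ht htδ x => ?_⟩
    have key := shiftSup_fe_est ht x
    have e : (shiftSup t fe x - fe x) / t - |de x|
        = (shiftSup t fe x - fe x - t * |de x|) / t := by
      field_simp
    rw [e, abs_div, abs_of_pos ht, div_le_iff₀ ht]
    calc abs (shiftSup t fe x - fe x - t * |de x|) ≤ 2 * t^2 := key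
      _ ≤ ε * t := by nlinarith

lemma fe_le_one : ∀ y : ℝ, -1 ≤ y → fe y ≤ 1 := by
  intro y hy
  unfold fe
  split_ifs <;> nlinarith

lemma fe_eq_negx : ∀ y : ℝ, -2 < y → y ≤ -1 → fe y = -y := by
  intro y h1 h2
  unfold fe
  rw [if_neg (by linarith), if_neg (by linarith), if_pos h2]

lemma fe_half : fe (1/2) = 1 := by
  unfold fe
  norm_num

lemma hval1 {x : ℝ} (h1 : -(1/4) ≤ x) (h2 : x ≤ 0) : shiftSup 1 fe x = 1 - x := by
  unfold shiftSup
  have hub : ∀ v ∈ (fun s => fe (x + s)) '' Set.Icc (-(1:ℝ)) 1, v ≤ 1 - x := by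
    rintro v ⟨s, hs, rfl⟩
    show fe (x + s) ≤ 1 - x
    rcases le_or_gt (x + s) (-1) with hy | hy
    · rw [fe_eq_negx (x+s) (by simp at hs; linarith [hs.1]) hy]
      simp only [Set.mem_Icc] at hs
      linarith [hs.1]
    · have := fe_le_one (x+s) (by linarith)
      linarith
  have hbdd : BddAbove ((fun s => fe (x + s)) '' Set.Icc (-(1:ℝ)) 1) := ⟨_, hub⟩
  apply le_antisymm
  · exact csSup_le ⟨fe x, ⟨0, ⟨by norm_num, by norm_num⟩, by simp⟩⟩ hub
  · have hmem : (1 : ℝ) - x ∈ (fun s => fe (x + s)) '' Set.Icc (-(1:ℝ)) 1 := by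
      refine ⟨-1, ⟨le_refl _, by norm_num⟩, ?_⟩
      show fe (x + -1) = 1 - x
      rw [fe_eq_negx (x + -1) (by linarith) (by linarith)]
      ring
    exact le_csSup hbdd hmem

lemma hval2 {x : ℝ} (h1 : 0 ≤ x) (h2 : x ≤ 1/4) : shiftSup 1 fe x = 1 := by
  unfold shiftSup
  have hub : ∀ v ∈ (fun s => fe (x + s)) '' Set.Icc (-(1:ℝ)) 1, v ≤ 1 := by
    rintro v ⟨s, hs, rfl⟩
    simp only [Set.mem_Icc] at hs
    exact fe_le_one (x+s) (by linarith [hs.1])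
  have hbdd : BddAbove ((fun s => fe (x + s)) '' Set.Icc (-(1:ℝ)) 1) := ⟨_, hub⟩
  apply le_antisymm
  · exact csSup_le ⟨fe x, ⟨0, ⟨by norm_num, by norm_num⟩, by simp⟩⟩ hub
  · have hmem : (1 : ℝ) ∈ (fun s => fe (x + s)) '' Set.Icc (-(1:ℝ)) 1 := by
      refine ⟨1/2 - x, ⟨by norm_num; linarith, by linarith⟩, ?_⟩
      show fe (x + (1/2 - x)) = 1
      have e : x + (1/2 - x) = 1/2 := by ring
      rw [e, fe_half]
    exact le_csSup hbdd hmem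

lemma shiftSup_h_left {t : ℝ} (ht : 0 < t) (ht2 : t ≤ 1/32) :
    shiftSup t (shiftSup 1 fe) (-2*t) = 1 + 3*t := by
  unfold shiftSup
  have hval : ∀ s ∈ Set.Icc (-t) t, shiftSup 1 fe (-2*t + s) = 1 + 2*t - s := by
    intro s hs
    simp only [Set.mem_Icc] at hs
    rw [hval1 (by linarith) (by linarith)]
    ring
  have hub : ∀ v ∈ (fun s => shiftSup 1 fe (-2*t + s)) '' Set.Icc (-t) t, v ≤ 1 + 3*t := by
    rintro v ⟨s, hs, rfl⟩
    show shiftSup 1 fe (-2*t + s) ≤ 1 + 3*t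
    rw [hval s hs]
    simp only [Set.mem_Icc] at hs
    linarith [hs.1]
  have hbdd : BddAbove ((fun s => shiftSup 1 fe (-2*t + s)) '' Set.Icc (-t) t) := ⟨_, hub⟩
  apply le_antisymm
  · exact csSup_le ⟨_, ⟨0, ⟨by linarith, by linarith⟩, rfl⟩⟩ hub
  · have hmem : (1 : ℝ) + 3*t ∈ (fun s => shiftSup 1 fe (-2*t + s)) '' Set.Icc (-t) t := by
      refine ⟨-t, ⟨le_refl _, by linarith⟩, ?_⟩
      show shiftSup 1 fe (-2*t + -t) = 1 + 3*t
      rw [hval1 (by linarith) (by linarith)]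
      ring
    exact le_csSup hbdd hmem

lemma shiftSup_h_right {t : ℝ} (ht : 0 < t) (ht2 : t ≤ 1/32) :
    shiftSup t (shiftSup 1 fe) (2*t) = 1 := by
  unfold shiftSup
  have hval : ∀ s ∈ Set.Icc (-t) t, shiftSup 1 fe (2*t + s) = 1 := by
    intro s hs
    simp only [Set.mem_Icc] at hs
    exact hval2 (by linarith) (by linarith)
  have hub : ∀ v ∈ (fun s => shiftSup 1 fe (2*t + s)) '' Set.Icc (-t) t, v ≤ 1 := by
    rintro v ⟨s, hs, rfl⟩
    show shiftSup 1 fe (2*t + s) ≤ 1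
    rw [hval s hs]
  have hbdd : BddAbove ((fun s => shiftSup 1 fe (2*t + s)) '' Set.Icc (-t) t) := ⟨_, hub⟩
  apply le_antisymm
  · exact csSup_le ⟨_, ⟨0, ⟨by linarith, by linarith⟩, rfl⟩⟩ hub
  · have hmem : (1 : ℝ) ∈ (fun s => shiftSup 1 fe (2*t + s)) '' Set.Icc (-t) t := by
      refine ⟨0, ⟨by linarith, by linarith⟩, hval 0 ⟨by linarith, by linarith⟩⟩
    exact le_csSup hbdd hmem

lemma h_not_in_domain : ¬ InStrongDomain (shiftSup 1 fe) := by
  rintro ⟨-, g, ⟨gUC, -⟩, hconv⟩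
  obtain ⟨δ, hδ, hd⟩ := hconv (1/4) (by norm_num)
  obtain ⟨δ', hδ', hd'⟩ := Metric.uniformContinuous_iff.1 gUC (1/4) (by norm_num)
  set t : ℝ := min (min (δ/2) (δ'/8)) (1/32) with htdef
  have ht : 0 < t := by
    apply lt_min (lt_min (by linarith) (by linarith)) (by norm_num)
  have htδ : t < δ := by
    calc t ≤ δ/2 := le_trans (min_le_left _ _) (min_le_left _ _)
      _ < δ := by linarith
  have htδ' : t ≤ δ'/8 := le_trans (min_le_left _ _) (min_le_right _ _)
  have ht32 : t ≤ 1/32 := min_le_right _ _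
  -- left point
  have hL := hd t ht htδ (-2*t)
  rw [shiftSup_h_left ht ht32, hval1 (by linarith) (by linarith)] at hL
  have eL : (1 + 3*t - (1 - -2*t)) / t - g (-2*t) = 1 - g (-2*t) := by
    field_simp
    ring
  rw [eL] at hL
  -- right point
  have hR := hd t ht htδ (2*t)
  rw [shiftSup_h_right ht ht32, hval2 (by linarith) (by linarith)] at hR
  have eR : ((1:ℝ) - 1) / t - g (2*t) = - g (2*t) := by
    field_simp
    ring
  rw [eR, abs_neg] at hR
  -- uniform continuity
  have hdist : dist (-2*t) (2*t) < δ' := by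
    rw [Real.dist_eq]
    have : |(-2*t) - 2*t| = 4*t := by
      rw [abs_of_nonpos (by linarith)]; ring
    rw [this]; linarith
  have hg := hd' hdist
  rw [Real.dist_eq] at hg
  rw [abs_le] at hL hR
  rw [abs_lt] at hg
  linarith [hL.1, hL.2, hR.1, hR.2, hg.1, hg.2]


/-- the domain of the strong generator of a sublinear Markov semigroup need not
be invariant under the semigroup: for `T_t f(x) = sup_{|s|≤t} f(x+s)` there is `f` in the
domain with `T_1 f` not in the domain. -/
theorem strong_domain_not_invariant :
    ∃ f : ℝ → ℝ, InStrongDomain f ∧ ¬ InStrongDomain (shiftSup 1 f) := by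
  exact ⟨fe, fe_in_domain, h_not_in_domain⟩
end

section
/- Let D be a linear subspace of bounded real-valued functions on R^d, x_0 ∈ R^d, and B : D → R a sublinear functional (subadditive and positively homogeneous) satisfying the positive maximum principle at x_0: if f ∈ D and f(x_0) = sup_x f(x) ≥ 0 then Bf ≤ 0. Then there exists a family (B_θ)_{θ∈Θ} of linear functionals on D, each satisfying the positive maximum principle at x_0, such that Bf = sup_{θ∈Θ} B_θ f for all f ∈ D; moreover for each f ∈ D the supremum is attained at some θ = θ(f). -/
/-- a sublinear functional `B` on a linear space `D` of bounded functions,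
satisfying the positive maximum principle at `x₀`, is the (attained) supremum of a family of
linear functionals each satisfying the positive maximum principle at `x₀`. -/
theorem sublinear_functional_representation
    {d : ℕ} (D : Submodule ℝ ((Fin d → ℝ) → ℝ))
    (hbd : ∀ f ∈ D, ∃ C, ∀ x, |f x| ≤ C)
    (x₀ : Fin d → ℝ) (B : ↥D → ℝ)
    (hsub : ∀ f g : ↥D, B (f + g) ≤ B f + B g)
    (hhom : ∀ (f : ↥D) (c : ℝ), 0 ≤ c → B (c • f) = c * B f)
    (hpmp : ∀ f : ↥D, (∀ x, (f : (Fin d → ℝ) → ℝ) x ≤ (f : (Fin d → ℝ) → ℝ) x₀) →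
      0 ≤ (f : (Fin d → ℝ) → ℝ) x₀ → B f ≤ 0) :
    ∃ (Θ : Type) (Bθ : Θ → (↥D →ₗ[ℝ] ℝ)),
      (∀ θ, ∀ f : ↥D, (∀ x, (f : (Fin d → ℝ) → ℝ) x ≤ (f : (Fin d → ℝ) → ℝ) x₀) →
        0 ≤ (f : (Fin d → ℝ) → ℝ) x₀ → Bθ θ f ≤ 0) ∧
      (∀ f : ↥D, (∀ θ, Bθ θ f ≤ B f) ∧ ∃ θ, Bθ θ f = B f) := by
  have hB0 : B 0 = 0 := by
    have := hhom 0 0 le_rfl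
    simpa using this
  have Nhom : ∀ c : ℝ, 0 < c → ∀ x : ↥D, B (c • x) = c * B x := fun c hc x => hhom x c hc.le
  -- key: B(c • f) ≥ c * B f for all c
  have hkey : ∀ (f : ↥D) (c : ℝ), c * B f ≤ B (c • f) := by
    intro f c
    rcases le_or_gt 0 c with hc | hc
    · exact (hhom f c hc).ge
    · have h1 : B ((-c) • (-f)) = (-c) * B (-f) := hhom (-f) (-c) (by linarith)
      have h2 : (0:ℝ) ≤ B f + B (-f) := by
        have := hsub f (-f)
        simpa [hB0] using this
      have : (-c) • (-f) = c • f := by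
        module
      rw [← this, h1]
      nlinarith
  refine ⟨{L : ↥D →ₗ[ℝ] ℝ // ∀ g : ↥D, L g ≤ B g}, Subtype.val, ?_, ?_⟩
  · intro θ f hmax hnn
    exact (θ.2 f).trans (hpmp f hmax hnn)
  · intro f
    refine ⟨fun θ => θ.2 f, ?_⟩
    by_cases hf : f = 0
    · -- extend the zero map on the trivial submodule
      obtain ⟨g, _, hgle⟩ := exists_extension_of_le_sublinear ⟨⊥, 0⟩ B Nhom hsub
        (fun x => by
          have : (x : ↥D) = 0 := Submodule.mem_bot ℝ |>.mp x.2
          simp [this, hB0])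
      exact ⟨⟨g, hgle⟩, by simp [hf, hB0, map_zero]⟩
    · obtain ⟨g, hgeq, hgle⟩ := exists_extension_of_le_sublinear
        (LinearPMap.mkSpanSingleton f (B f) hf) B Nhom hsub
        (fun x => by
          obtain ⟨c, hc⟩ := Submodule.mem_span_singleton.1 x.2
          have hx : (x : ↥D) = c • f := hc.symm
          have hxe : x = c • (⟨f, Submodule.mem_span_singleton_self f⟩ :
              (LinearPMap.mkSpanSingleton f (B f) hf).domain) := Subtype.ext hx
          rw [hxe, LinearPMap.map_smul, LinearPMap.mkSpanSingleton_apply]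
          simp only [smul_eq_mul]
          exact hkey f c)
      refine ⟨⟨g, hgle⟩, ?_⟩
      have := hgeq ⟨f, Submodule.mem_span_singleton_self f⟩
      rw [this, LinearPMap.mkSpanSingleton_apply]
end
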